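/- Let n ≥ 0 and let A be a tournament payoff matrix of size 2n+1. Then every probability vector v with A.mulVec v = 0 is totally mixed: v i > 0 for every i. -/

import Mathlib

open Matrix

/-- A probability vector: nonnegative entries summing to `1`. -/
def IsProbVec {m : ℕ} (v : Fin m → ℝ) : Prop := (∀ i, 0 ≤ v i) ∧ ∑ i, v i = 1

/-- A tournament payoff matrix: zero diagonal, off-diagonal entries `±1`,
skew-symmetric. -/
def IsTournament {m : ℕ} (A : Matrix (Fin m) (Fin m) ℝ) : Prop :=
  (∀ i, A i i = 0) ∧ ∀ i j : Fin m, i ≠ j → (A i j = 1 ∨ A i j = -1) ∧ A j i = -A i j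

/-- For a `(2n+1)`-object RPS game, every probability vector in the kernel of the
payoff matrix is totally mixed. -/
theorem kernel_prob_vec_totally_mixed (n : ℕ)
    (A : Matrix (Fin (2 * n + 1)) (Fin (2 * n + 1)) ℝ) (hA : IsTournament A)
    (v : Fin (2 * n + 1) → ℝ) (hv : IsProbVec v) (hker : A.mulVec v = 0) :
    ∀ i, 0 < v i := by
  obtain ⟨hA0, hA1⟩ := hA
  obtain ⟨hv0, hv1⟩ := hv
  intro k
  rcases (hv0 k).lt_or_eq with h | h
  · exact h
  exfalso
  have hvk : v k = 0 := h.symm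
  set ι := {j : Fin (2 * n + 1) // j ≠ k} with hι
  have hcard : Fintype.card ι = 2 * n := by
    simp [hι, Fintype.card_subtype_compl]
  -- integer lift of the principal submatrix deleting k
  set B : Matrix ι ι ℤ := fun i j => if (i : Fin (2*n+1)) = j then 0 else
    if A i j = 1 then 1 else -1 with hB
  have hBcast : ∀ i j : ι, ((B i j : ℤ) : ℝ) = A i j := by
    intro i j
    by_cases hij : (i : Fin (2*n+1)) = (j : Fin (2*n+1))
    · have hAij : A i j = 0 := by rw [hij]; exact hA0 j
      rw [hB]; simp only [if_pos hij]; rw [hAij]; norm_num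
    · rcases (hA1 i j hij).1 with h1 | h1
      · rw [hB]; simp only [if_neg hij, if_pos h1]; rw [h1]; norm_num
      · have hne1 : A (i : Fin (2*n+1)) j ≠ 1 := by rw [h1]; norm_num
        rw [hB]; simp only [if_neg hij, if_neg hne1]; rw [h1]; norm_num
  -- mod 2 the matrix is J + 1
  set M : Matrix ι ι (ZMod 2) := B.map (Int.cast : ℤ → ZMod 2) with hM
  set J : Matrix ι ι (ZMod 2) := Matrix.of (fun _ _ => 1) with hJ
  have hMJ : M = J + 1 :=  by
    ext i j
    by_cases hij : i = j
    · subst hij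
      have hB0 : B i i = 0 := by rw [hB]; exact if_pos rfl
      rw [hM, hJ]
      simp only [Matrix.map_apply, hB0, Matrix.add_apply, Matrix.of_apply,
        Matrix.one_apply_eq, Int.cast_zero]
      decide
    · have hij' : (i : Fin (2*n+1)) ≠ (j : Fin (2*n+1)) := by
        exact fun hh => hij (Subtype.ext hh)
      rw [hM, hJ]
      simp only [Matrix.map_apply, hB, if_neg hij', Matrix.add_apply, Matrix.of_apply,
        Matrix.one_apply_ne hij, add_zero]
      by_cases h1 : A (i : Fin (2*n+1)) j = 1
      · have hBij : B i j = 1 := by rw [hB]; simp only [if_neg hij', if_pos h1]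
        change ((B i j : ℤ) : ZMod 2) = 1; rw [hBij]; decide
      · have hBij : B i j = -1 := by rw [hB]; simp only [if_neg hij', if_neg h1]
        change ((B i j : ℤ) : ZMod 2) = 1; rw [hBij]; decide
  have hJJ : J * J = 0 := by
    ext i j
    simp only [Matrix.mul_apply, hJ, Matrix.of_apply, mul_one, Matrix.zero_apply]
    rw [Finset.sum_const, Finset.card_univ, hcard, nsmul_eq_mul, mul_one, Nat.cast_mul]
    have : ((2 : ℕ) : ZMod 2) = 0 := ZMod.natCast_self 2
    rw [this, zero_mul]
  have hJ2 : J + J = 0 := by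
    ext i j
    simp only [Matrix.add_apply, hJ, Matrix.of_apply, Matrix.zero_apply]
    decide
  have hMM : M * M = 1 := by
    rw [hMJ, add_mul, mul_add, mul_add, hJJ, mul_one, one_mul, one_mul]
    rw [zero_add, ← add_assoc, hJ2, zero_add]
  have hdetM : M.det ≠ 0 := by
    have : M.det * M.det = 1 := by rw [← Matrix.det_mul, hMM, Matrix.det_one]
    intro h0
    rw [h0, mul_zero] at this
    exact zero_ne_one this
  have hdetB : B.det ≠ 0 := by
    intro h0
    apply hdetM
    have := RingHom.map_det (Int.castRingHom (ZMod 2)) B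
    rw [h0] at this
    simp only [map_zero] at this
    rw [hM]
    exact this.symm
  -- the real submatrix
  set A' : Matrix ι ι ℝ := Matrix.of (fun i j => A i j) with hA'
  have hmapBA : B.map (Int.cast : ℤ → ℝ) = A' := by
    ext i j
    simpa [Matrix.map_apply, hA'] using hBcast i j
  have hdetA' : A'.det ≠ 0 := by
    have hd := RingHom.map_det (Int.castRingHom ℝ) B
    rw [RingHom.mapMatrix_apply] at hd
    simp only [Int.coe_castRingHom, eq_intCast] at hd
    rw [← hmapBA, ← hd]
    exact Int.cast_ne_zero.mpr hdetB
  -- splitting sums over Fin (2n+1) into ι part plus k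
  have hsum : ∀ f : Fin (2 * n + 1) → ℝ, ∑ j, f j = (∑ j : ι, f (j : Fin (2*n+1))) + f k := by
    intro f
    rw [← Finset.sum_erase_add _ _ (Finset.mem_univ k)]
    congr 1
    exact Finset.sum_subtype _ (by simp [Finset.mem_erase]) f
  set v' : ι → ℝ := fun j => v j with hv'
  have hker' : A'.mulVec v' = 0 := by
    funext i
    have h1 : (A.mulVec v) i = 0 := by rw [hker]; rfl
    rw [Matrix.mulVec, dotProduct] at h1
    rw [hsum (fun j => A i j * v j)] at h1
    have : A (i : Fin (2*n+1)) k * v k = 0 := by rw [hvk, mul_zero]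
    rw [this, add_zero] at h1
    simpa [Matrix.mulVec, dotProduct, hA', hv'] using h1
  have hv'0 : v' = 0 := Matrix.eq_zero_of_mulVec_eq_zero hdetA' hker'
  have : (1 : ℝ) = 0 := by
    rw [← hv1, hsum v, hvk, add_zero]
    apply Finset.sum_eq_zero
    intro j _
    have := congrFun hv'0 j
    simpa [hv'] using this
  exact one_ne_zero this
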